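/- Let d ≥ 2 and let ψ ∈ C^d be a nonzero vector. Let A be the standard basis {e_i} and B the Fourier basis {f_j} where f_j has i-th entry ω^{ij}/√d, ω = e^{2πi/d}. Define n_A(ψ) = #{i : ⟨e_i, ψ⟩ ≠ 0} and n_B(ψ) = #{j : ⟨f_j, ψ⟩ ≠ 0}. If the Kirkwood-Dirac distribution Q_{ij} = ⟨e_i,ψ⟩⟨ψ,f_j⟩⟨f_j,e_i⟩ satisfies Q_{ij} ≥ 0 (real and nonnegative) for all i,j, then n_A(ψ)·n_B(ψ) ≤ d. -/

import Mathlib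

open Complex Finset
open scoped Classical

noncomputable def dftOmega (d : ℕ) : ℂ := Complex.exp (2 * Real.pi * Complex.I / d)

/-- The j-th Fourier basis vector of `ℂ^d`, with i-th entry `ω^{ij}/√d`. -/
noncomputable def fourierVec (d : ℕ) (j : Fin d) : Fin d → ℂ :=
  fun i => dftOmega d ^ ((i : ℕ) * (j : ℕ)) / Real.sqrt d

/-- The j-th Fourier coefficient `⟨f_j, ψ⟩ = (1/√d)∑_i ω^{−ij} ψ(i)`. -/
noncomputable def dftCoeff (d : ℕ) (ψ : Fin d → ℂ) (j : Fin d) : ℂ :=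
  ∑ i, (starRingEnd ℂ) (fourierVec d j i) * ψ i

/-- Number of nonzero standard-basis coordinates of ψ. -/
noncomputable def nA (d : ℕ) (ψ : Fin d → ℂ) : ℕ :=
  (Finset.univ.filter fun i => ψ i ≠ 0).card

/-- Number of nonzero Fourier coefficients of ψ. -/
noncomputable def nB (d : ℕ) (ψ : Fin d → ℂ) : ℕ :=
  (Finset.univ.filter fun j => dftCoeff d ψ j ≠ 0).card

/-- Kirkwood-Dirac distribution `Q_{ij} = ⟨e_i,ψ⟩⟨ψ,f_j⟩⟨f_j,e_i⟩` of ψ with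
respect to the standard basis and the Fourier basis. -/
noncomputable def KD (d : ℕ) (ψ : Fin d → ℂ) (i j : Fin d) : ℂ :=
  ψ i * (∑ k, (starRingEnd ℂ) (ψ k) * fourierVec d j k) * (starRingEnd ℂ) (fourierVec d j i)

/- ### Auxiliary lemmas -/

lemma dvd_gcd_mul' {d x g y : ℤ} (h1 : d ∣ x * y) (h2 : d ∣ g * y) : d ∣ (gcd x g) * y := by
  rw [← Int.coe_gcd, Int.gcd_eq_gcd_ab]
  have e : (x * x.gcdA g + g * x.gcdB g) * y = (x*y) * x.gcdA g + (g*y) * x.gcdB g := by ring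
  rw [e]
  exact dvd_add (h1.mul_right _) (h2.mul_right _)

lemma dvd_finset_gcd_mul' {ι : Type*} (s : Finset ι) (f : ι → ℤ) (y d : ℤ)
    (h : ∀ i ∈ s, d ∣ f i * y) : d ∣ (s.gcd f) * y := by
  classical
  induction s using Finset.induction_on with
  | empty => simp
  | insert a s hni ih =>
    rw [Finset.gcd_insert]
    exact dvd_gcd_mul' (h a (Finset.mem_insert_self a s))
      (ih fun i hi => h i (Finset.mem_insert_of_mem hi))

lemma card_le_div' {d : ℕ} (hd : 0 < d) (s : Finset (Fin d)) (i0 : Fin d) (A : ℕ) (hA : 0 < A)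
    (hAd : A ∣ d) (hdiv : ∀ i ∈ s, (A:ℤ) ∣ (i:ℤ) - (i0:ℤ)) : s.card ≤ d / A := by
  have hdz : (d:ℤ) ≠ 0 := by exact_mod_cast hd.ne'
  set m : Fin d → ℤ := fun i => ((i:ℤ) - (i0:ℤ)) % d with hm
  have hm0 : ∀ i, 0 ≤ m i := fun i => Int.emod_nonneg _ hdz
  have hml : ∀ i, m i < d := fun i => Int.emod_lt_of_pos _ (by exact_mod_cast hd)
  have hAm : ∀ i ∈ s, (A:ℤ) ∣ m i := by
    intro i hi
    show (A:ℤ) ∣ ((i:ℤ) - (i0:ℤ)) % (d:ℤ)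
    rw [Int.emod_def]
    exact dvd_sub (hdiv i hi) (((Int.natCast_dvd_natCast.mpr hAd)).mul_right _)
  have hAmn : ∀ i ∈ s, A ∣ (m i).toNat := by
    intro i hi
    have := hAm i hi
    rwa [← Int.toNat_of_nonneg (hm0 i), Int.natCast_dvd_natCast] at this
  rw [← Finset.card_range (d/A)]
  apply Finset.card_le_card_of_injOn (fun i => (m i).toNat / A)
  · intro i hi
    rw [Finset.mem_coe, Finset.mem_range]
    apply Nat.div_lt_div_of_lt_of_dvd hAd
    have := hml i
    omega
  · intro i hi i' hi' hF
    have hmm : (m i).toNat = (m i').toNat := by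
      have e1 := Nat.div_mul_cancel (hAmn i (Finset.mem_coe.mp hi))
      have e2 := Nat.div_mul_cancel (hAmn i' (Finset.mem_coe.mp hi'))
      have hF' : (m i).toNat / A = (m i').toNat / A := hF
      rw [← e1, ← e2, hF']
    have hmeq : m i = m i' := by
      have := hm0 i; have := hm0 i'; omega
    have hmod : ((i:ℤ) - (i0:ℤ)) ≡ ((i':ℤ) - (i0:ℤ)) [ZMOD (d:ℤ)] := hmeq
    have hdvd : (d:ℤ) ∣ ((i':ℤ) - (i0:ℤ)) - ((i:ℤ) - (i0:ℤ)) := hmod.dvd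
    have hdvd' : (d:ℤ) ∣ (i':ℤ) - (i:ℤ) := by
      have h2 : ((i':ℤ) - (i0:ℤ)) - ((i:ℤ) - (i0:ℤ)) = (i':ℤ) - (i:ℤ) := by ring
      rwa [h2] at hdvd
    have hz : (i':ℤ) - (i:ℤ) = 0 := by
      apply Int.eq_zero_of_abs_lt_dvd hdvd'
      have := i.isLt; have := i'.isLt
      rw [abs_lt]
      constructor <;> [push_cast; push_cast] <;> omega
    have : (i':ℤ) = (i:ℤ) := by omega
    exact (Fin.ext (by exact_mod_cast this)).symm

lemma conj_omega_mul (d : ℕ) : (starRingEnd ℂ) (dftOmega d) * dftOmega d = 1 := by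
  rw [dftOmega, ← Complex.exp_conj, ← Complex.exp_add]
  have : (starRingEnd ℂ) (2 * (Real.pi:ℂ) * Complex.I / d) + 2 * (Real.pi:ℂ) * Complex.I / d = 0 := by
    simp [map_div₀, Complex.conj_I, map_ofNat]
    ring
  rw [this, Complex.exp_zero]

lemma abs_omega (d : ℕ) (hd : 2 ≤ d) : ‖dftOmega d‖ = 1 := by
  have hω : IsPrimitiveRoot (dftOmega d) d := Complex.isPrimitiveRoot_exp d (by omega)
  have h1 : ‖dftOmega d‖ ^ d = 1 := by
    rw [← norm_pow, hω.pow_eq_one, norm_one]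
  have h0 : (0:ℝ) ≤ ‖dftOmega d‖ := norm_nonneg _
  rcases lt_trichotomy (‖dftOmega d‖) 1 with hx|hx|hx
  · have := pow_lt_one₀ h0 hx (show d ≠ 0 by omega); linarith
  · exact hx
  · have := one_lt_pow₀ hx (show d ≠ 0 by omega); linarith

lemma KD_eq (d : ℕ) (ψ : Fin d → ℂ) (i j : Fin d) :
    KD d ψ i j = ψ i * (starRingEnd ℂ) (dftCoeff d ψ j) *
      ((starRingEnd ℂ) (dftOmega d) ^ ((i : ℕ) * (j : ℕ)) / (Real.sqrt d : ℂ)) := by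
  rw [KD]
  have h1 : (∑ k, (starRingEnd ℂ) (ψ k) * fourierVec d j k) = (starRingEnd ℂ) (dftCoeff d ψ j) := by
    rw [dftCoeff, map_sum]
    congr 1; funext k
    rw [map_mul, Complex.conj_conj, mul_comm]
  rw [h1]
  congr 1
  simp [fourierVec, map_div₀, map_pow, Complex.conj_ofReal]

lemma kd_key (d : ℕ) (hd : 2 ≤ d) (ψ : Fin d → ℂ)
    (h : ∀ i j : Fin d, ∃ r : ℝ, 0 ≤ r ∧ KD d ψ i j = (r : ℂ))
    (i i' j j' : Fin d) (hi : ψ i ≠ 0) (hi' : ψ i' ≠ 0)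
    (hj : dftCoeff d ψ j ≠ 0) (hj' : dftCoeff d ψ j' ≠ 0) :
    (d:ℤ) ∣ (((i:ℕ):ℤ) - ((i':ℕ):ℤ)) * (((j:ℕ):ℤ) - ((j':ℕ):ℤ)) := by
  set ω := dftOmega d with hωdef
  have hω : IsPrimitiveRoot ω d := Complex.isPrimitiveRoot_exp d (by omega)
  have hu : (starRingEnd ℂ) ω * ω = 1 := conj_omega_mul d
  have hω0 : ω ≠ 0 := right_ne_zero_of_mul_eq_one hu
  have huinv : (starRingEnd ℂ) ω = ω⁻¹ := eq_inv_of_mul_eq_one_left hu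
  have hsd : ((Real.sqrt d : ℝ) : ℂ) ≠ 0 := by
    rw [Complex.ofReal_ne_zero]
    positivity
  have hd0 : (0:ℝ) < d := by positivity
  have hKDne : ∀ (a b : Fin d), ψ a ≠ 0 → dftCoeff d ψ b ≠ 0 → KD d ψ a b ≠ 0 := by
    intro a b ha hb
    rw [KD_eq]
    apply mul_ne_zero (mul_ne_zero ha _)
    · exact div_ne_zero (pow_ne_zero _ (by rw [huinv]; exact inv_ne_zero hω0)) hsd
    · exact star_ne_zero.mpr hb
  obtain ⟨r1, hr1n, hr1⟩ := h i j
  obtain ⟨r2, hr2n, hr2⟩ := h i' j'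
  obtain ⟨s1, hs1n, hs1⟩ := h i j'
  obtain ⟨s2, hs2n, hs2⟩ := h i' j
  set N : ℕ := (i:ℕ) * (j:ℕ) + (i':ℕ) * (j':ℕ) with hN
  set M : ℕ := (i:ℕ) * (j':ℕ) + (i':ℕ) * (j:ℕ) with hM
  have e : KD d ψ i j * KD d ψ i' j' * ω ^ N = KD d ψ i j' * KD d ψ i' j * ω ^ M := by
    rw [KD_eq, KD_eq, KD_eq, KD_eq, huinv, hN, hM]
    simp only [pow_add, ← inv_pow]
    have h1 : ω ^ ((i:ℕ)*(j:ℕ)) ≠ 0 := pow_ne_zero _ hω0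
    have h2 : ω ^ ((i':ℕ)*(j':ℕ)) ≠ 0 := pow_ne_zero _ hω0
    have h3 : ω ^ ((i:ℕ)*(j':ℕ)) ≠ 0 := pow_ne_zero _ hω0
    have h4 : ω ^ ((i':ℕ)*(j:ℕ)) ≠ 0 := pow_ne_zero _ hω0
    rw [inv_pow, inv_pow, inv_pow, inv_pow]
    field_simp
  rw [hr1, hr2, hs1, hs2] at e
  have habs : ‖ω‖ = 1 := abs_omega d hd
  have hrs : r1 * r2 = s1 * s2 := by
    have h2 := congrArg (‖·‖) e
    simpa [norm_mul, norm_pow, habs, Complex.norm_real, Real.norm_eq_abs, _root_.abs_of_nonneg hr1n,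
      _root_.abs_of_nonneg hr2n, _root_.abs_of_nonneg hs1n, _root_.abs_of_nonneg hs2n] using h2
  have hr1p : (0:ℝ) < r1 := lt_of_le_of_ne hr1n (by
    intro hc; exact hKDne i j hi hj (by rw [hr1, ← hc]; norm_num))
  have hr2p : (0:ℝ) < r2 := lt_of_le_of_ne hr2n (by
    intro hc; exact hKDne i' j' hi' hj' (by rw [hr2, ← hc]; norm_num))
  have hpow : ω ^ N = ω ^ M := by
    have hne : ((r1:ℂ) * (r2:ℂ)) ≠ 0 :=
      mul_ne_zero (Complex.ofReal_ne_zero.mpr hr1p.ne') (Complex.ofReal_ne_zero.mpr hr2p.ne')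
    have hc : ((s1:ℂ) * (s2:ℂ)) = ((r1:ℂ) * (r2:ℂ)) := by
      rw [← Complex.ofReal_mul, ← Complex.ofReal_mul, hrs]
    exact mul_left_cancel₀ hne (by rw [e, hc])
  have hdvdZ : (d:ℤ) ∣ (N:ℤ) - (M:ℤ) := by
    rcases le_total M N with hle | hle
    · have h1 : ω ^ (N - M) = 1 := by
        apply mul_right_cancel₀ (pow_ne_zero M hω0)
        rw [← pow_add, Nat.sub_add_cancel hle, one_mul, hpow]
      have h2 : d ∣ N - M := (hω.pow_eq_one_iff_dvd _).mp h1
      have h3 : (d:ℤ) ∣ ((N - M : ℕ) : ℤ) := Int.natCast_dvd_natCast.mpr h2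
      have h4 : ((N - M : ℕ) : ℤ) = (N:ℤ) - (M:ℤ) := by omega
      rwa [h4] at h3
    · have h1 : ω ^ (M - N) = 1 := by
        apply mul_right_cancel₀ (pow_ne_zero N hω0)
        rw [← pow_add, Nat.sub_add_cancel hle, one_mul, hpow]
      have h2 : d ∣ M - N := (hω.pow_eq_one_iff_dvd _).mp h1
      have h3 : (d:ℤ) ∣ ((M - N : ℕ) : ℤ) := Int.natCast_dvd_natCast.mpr h2
      have h4 : ((M - N : ℕ) : ℤ) = (M:ℤ) - (N:ℤ) := by omega
      rw [h4] at h3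
      exact dvd_sub_comm.mp h3
  have heq : (((i:ℕ):ℤ) - ((i':ℕ):ℤ)) * (((j:ℕ):ℤ) - ((j':ℕ):ℤ)) = (N:ℤ) - (M:ℤ) := by
    rw [hN, hM]; push_cast; ring
  rw [heq]
  exact hdvdZ

/-- If the Kirkwood-Dirac distribution of a nonzero `ψ ∈ ℂ^d` (w.r.t. the standard
and Fourier bases) is everywhere a nonnegative real, then `n_A(ψ)·n_B(ψ) ≤ d`. -/
theorem kd_classical_support_le (d : ℕ) (hd : 2 ≤ d) (ψ : Fin d → ℂ) (hψ : ψ ≠ 0)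
    (h : ∀ i j : Fin d, ∃ r : ℝ, 0 ≤ r ∧ KD d ψ i j = (r : ℂ)) :
    nA d ψ * nB d ψ ≤ d := by
  have hd0 : 0 < d := by omega
  set S := Finset.univ.filter (fun i => ψ i ≠ 0) with hSdef
  set T := Finset.univ.filter (fun j => dftCoeff d ψ j ≠ 0) with hTdef
  have hnA : nA d ψ = S.card := rfl
  have hnB : nB d ψ = T.card := rfl
  rw [hnA, hnB]
  rcases S.eq_empty_or_nonempty with hSe | ⟨i0, hi0⟩
  · rw [hSe, Finset.card_empty, zero_mul]; exact Nat.zero_le d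
  rcases T.eq_empty_or_nonempty with hTe | ⟨j0, hj0⟩
  · rw [hTe, Finset.card_empty, mul_zero]; exact Nat.zero_le d
  have hmemS : ∀ i, i ∈ S → ψ i ≠ 0 := by
    intro i hi; rw [hSdef, Finset.mem_filter] at hi; exact hi.2
  have hmemT : ∀ j, j ∈ T → dftCoeff d ψ j ≠ 0 := by
    intro j hj; rw [hTdef, Finset.mem_filter] at hj; exact hj.2
  have hkey : ∀ i ∈ S, ∀ j ∈ T,
      (d:ℤ) ∣ (((i:ℕ):ℤ) - ((i0:ℕ):ℤ)) * (((j:ℕ):ℤ) - ((j0:ℕ):ℤ)) := by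
    intro i hi j hj
    exact kd_key d hd ψ h i i0 j j0 (hmemS i hi) (hmemS i0 hi0) (hmemT j hj) (hmemT j0 hj0)
  set fS : Fin d → ℤ := fun i => ((i:ℕ):ℤ) - ((i0:ℕ):ℤ) with hfS
  set fT : Fin d → ℤ := fun j => ((j:ℕ):ℤ) - ((j0:ℕ):ℤ) with hfT
  set gA : ℤ := gcd (d:ℤ) (S.gcd fS) with hgA
  set gB : ℤ := gcd (d:ℤ) (T.gcd fT) with hgB
  have step1 : ∀ j ∈ T, (d:ℤ) ∣ gA * fT j := fun j hj =>
    dvd_gcd_mul' (dvd_mul_right _ _)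
      (dvd_finset_gcd_mul' S fS (fT j) d (fun i hi => hkey i hi j hj))
  have step2 : (d:ℤ) ∣ gB * gA :=
    dvd_gcd_mul' (dvd_mul_right _ _)
      (dvd_finset_gcd_mul' T fT gA d (fun j hj => by rw [mul_comm]; exact step1 j hj))
  have hdz : (d:ℤ) ≠ 0 := by exact_mod_cast hd0.ne'
  have hgA_nonneg : 0 ≤ gA := by rw [hgA, ← Int.coe_gcd]; exact Int.natCast_nonneg _
  have hgB_nonneg : 0 ≤ gB := by rw [hgB, ← Int.coe_gcd]; exact Int.natCast_nonneg _
  have hgA_dvd : gA ∣ (d:ℤ) := gcd_dvd_left _ _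
  have hgB_dvd : gB ∣ (d:ℤ) := gcd_dvd_left _ _
  have hgA_ne : gA ≠ 0 := fun h0 => hdz (((_root_.gcd_eq_zero_iff _ _).mp (hgA ▸ h0)).1)
  have hgB_ne : gB ≠ 0 := fun h0 => hdz (((_root_.gcd_eq_zero_iff _ _).mp (hgB ▸ h0)).1)
  set A := gA.toNat with hA
  set B := gB.toNat with hB
  have hAcast : (A:ℤ) = gA := Int.toNat_of_nonneg hgA_nonneg
  have hBcast : (B:ℤ) = gB := Int.toNat_of_nonneg hgB_nonneg
  have hA_dvd_d : A ∣ d := by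
    rw [← Int.natCast_dvd_natCast, hAcast]; exact hgA_dvd
  have hB_dvd_d : B ∣ d := by
    rw [← Int.natCast_dvd_natCast, hBcast]; exact hgB_dvd
  have hApos : 0 < A := Nat.pos_of_ne_zero (fun h0 => hgA_ne (by rw [← hAcast, h0]; rfl))
  have hBpos : 0 < B := Nat.pos_of_ne_zero (fun h0 => hgB_ne (by rw [← hBcast, h0]; rfl))
  have hdBA : d ∣ B * A := by
    rw [← Int.natCast_dvd_natCast]
    push_cast
    rw [hAcast, hBcast]
    exact step2
  have hSc : S.card ≤ d / A := by
    apply card_le_div' hd0 S i0 A hApos hA_dvd_d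
    intro i hi
    rw [hAcast]
    exact dvd_trans (gcd_dvd_right _ _) (Finset.gcd_dvd hi)
  have hTc : T.card ≤ d / B := by
    apply card_le_div' hd0 T j0 B hBpos hB_dvd_d
    intro j hj
    rw [hBcast]
    exact dvd_trans (gcd_dvd_right _ _) (Finset.gcd_dvd hj)
  have hu : A * (d / A) = d := Nat.mul_div_cancel' hA_dvd_d
  have hv : B * (d / B) = d := Nat.mul_div_cancel' hB_dvd_d
  obtain ⟨w, hw⟩ := hdBA
  have key2 : d * (w * ((d/A) * (d/B))) = d * d := by
    calc d * (w * ((d/A) * (d/B))) = (B * A) * ((d/A) * (d/B)) := by rw [hw]; ring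
    _ = (A * (d/A)) * (B * (d/B)) := by ring
    _ = d * d := by rw [hu, hv]
  have key3 : w * ((d/A) * (d/B)) = d := Nat.eq_of_mul_eq_mul_left hd0 key2
  have key4 : (d/A) * (d/B) ≤ d := Nat.le_of_dvd hd0 (Dvd.intro_left w key3)
  calc S.card * T.card ≤ (d/A) * (d/B) := Nat.mul_le_mul hSc hTc
  _ ≤ d := key4
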